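/- Fix reals a, b > 0. Then lim_{n→∞} ₁F₂(-n; a, b; z/n) = ₀F₂(-; a, b; -z) uniformly on compact subsets of ℂ, where ₁F₂(-n; a, b; x) = Σ_{k=0}^{n} (-n)_k x^k / ((a)_k (b)_k k!) and ₀F₂(-; a, b; w) = Σ_{k=0}^{∞} w^k / ((a)_k (b)_k k!). -/

import Mathlib

open Filter Topology

/-- Rising factorial (Pochhammer symbol). -/
noncomputable def poch (a : ℝ) (m : ℕ) : ℝ := ∏ i ∈ Finset.range m, (a + i)

lemma poch_pos {a : ℝ} (ha : 0 < a) (k : ℕ) : 0 < poch a k :=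
  Finset.prod_pos fun i _ => by positivity

lemma poch_ge {a : ℝ} (ha : 0 < a) (k : ℕ) : min a 1 ≤ poch a k := by
  cases k with
  | zero => simp [poch]
  | succ k =>
    rw [poch, Finset.prod_range_succ' (fun i => a + i) k]
    have h1 : (1 : ℝ) ≤ ∏ i ∈ Finset.range k, (a + ((i + 1 : ℕ) : ℝ)) := by
      have := Finset.prod_le_prod (s := Finset.range k) (f := fun _ => (1:ℝ))
        (g := fun i => a + ((i + 1 : ℕ) : ℝ)) (fun i _ => zero_le_one)
        (fun i _ => by
          have : (1 : ℝ) ≤ ((i + 1 : ℕ) : ℝ) := by exact_mod_cast Nat.one_le_iff_ne_zero.2 (by omega)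
          push_cast at this ⊢
          linarith)
      simpa using this
    calc min a 1 ≤ a := min_le_left _ _
      _ = 1 * (a + ((0 : ℕ) : ℝ)) := by norm_num
      _ ≤ (∏ i ∈ Finset.range k, (a + ((i + 1 : ℕ) : ℝ))) * (a + ((0 : ℕ) : ℝ)) := by
          apply mul_le_mul_of_nonneg_right h1; norm_num; linarith

/-- the scaled coefficient -/
noncomputable def cc (n k : ℕ) : ℝ := ∏ i ∈ Finset.range k, ((i : ℝ) / n - 1)

lemma poch_neg_eq (n k : ℕ) (hn : 1 ≤ n) :
    poch (-(n : ℝ)) k = (n : ℝ) ^ k * cc n k := by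
  have hn0 : (n : ℝ) ≠ 0 := by positivity
  have h : ∀ i ∈ Finset.range k, (-(n:ℝ) + i) = (n:ℝ) * ((i:ℝ)/n - 1) := by
    intro i _
    field_simp
    ring
  rw [poch, cc, Finset.prod_congr rfl h, Finset.prod_mul_distrib, Finset.prod_const,
    Finset.card_range]

lemma cc_tendsto (k : ℕ) :
    Tendsto (fun n : ℕ => cc n k) atTop (𝓝 ((-1 : ℝ) ^ k)) := by
  have : ((-1 : ℝ) ^ k) = ∏ _i ∈ Finset.range k, (-1 : ℝ) := by
    simp
  rw [this]
  apply tendsto_finset_prod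
  intro i _
  have h0 : Tendsto (fun n : ℕ => (i : ℝ) / n) atTop (𝓝 0) :=
    tendsto_const_div_atTop_nhds_zero_nat _
  simpa using h0.sub_const 1

lemma cc_abs_le (n k : ℕ) (hn : 1 ≤ n) : |cc n k| ≤ 1 := by
  rcases le_or_gt k n with hkn | hkn
  · rw [cc, Finset.abs_prod]
    apply Finset.prod_le_one
    · intro i _; exact abs_nonneg _
    · intro i hi
      rw [Finset.mem_range] at hi
      have hin : (i : ℝ) ≤ (n : ℝ) := by exact_mod_cast le_trans (le_of_lt hi) hkn
      have hnpos : (0 : ℝ) < n := by positivity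
      rw [abs_le]
      constructor
      · have : (0:ℝ) ≤ (i : ℝ) / n := by positivity
        linarith
      · have : (i : ℝ) / n ≤ 1 := by
          rw [div_le_one hnpos]; exact hin
        linarith
  · have : cc n k = 0 := by
      apply Finset.prod_eq_zero (Finset.mem_range.2 hkn)
      have hn0 : (n : ℝ) ≠ 0 := by positivity
      field_simp
      norm_num
    simp [this]

lemma poch_neg_vanish (n k : ℕ) (hk : n < k) : poch (-(n : ℝ)) k = 0 := by
  apply Finset.prod_eq_zero (Finset.mem_range.2 hk)
  simp

/-- `₁F₂(-n; a, b; z/n) → ₀F₂(-; a, b; -z)` uniformly on compact subsets of `ℂ`. -/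
theorem oneF_two_tendsto_zeroF_two (a b : ℝ) (ha : a > 0) (hb : b > 0) :
    ∀ K : Set ℂ, IsCompact K →
      TendstoUniformlyOn
        (fun (n : ℕ) (z : ℂ) => ∑ k ∈ Finset.range (n + 1),
          (poch (-(n : ℝ)) k : ℂ) * (z / (n : ℂ)) ^ k /
            ((poch a k : ℂ) * (poch b k : ℂ) * (k.factorial : ℂ)))
        (fun z : ℂ => ∑' k : ℕ,
          (-z) ^ k / ((poch a k : ℂ) * (poch b k : ℂ) * (k.factorial : ℂ)))
        atTop K := by
  intro K hK
  obtain ⟨R, hR0, hR⟩ := hK.isBounded.exists_pos_norm_le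
  set D : ℕ → ℝ := fun k => poch a k * poch b k * k.factorial with hDdef
  have hD : ∀ k, 0 < D k := fun k => by
    have := poch_pos ha k; have := poch_pos hb k
    have : (0:ℝ) < k.factorial := by positivity
    simp only [hDdef]; positivity
  set m : ℝ := min a 1 * min b 1 with hmdef
  have hm : 0 < m := by
    have h1 : 0 < min a 1 := lt_min ha one_pos
    have h2 : 0 < min b 1 := lt_min hb one_pos
    positivity
  have hDge : ∀ k, m * k.factorial ≤ D k := by
    intro k
    have h1 := poch_ge ha k
    have h2 := poch_ge hb k
    have h1' : 0 < min a 1 := lt_min ha one_pos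
    have hf : (0:ℝ) < k.factorial := by positivity
    calc m * k.factorial = min a 1 * min b 1 * k.factorial := rfl
      _ ≤ poch a k * poch b k * k.factorial := by
        apply mul_le_mul_of_nonneg_right _ (le_of_lt hf)
        exact mul_le_mul h1 h2 (le_of_lt (lt_min hb one_pos)) (le_of_lt (poch_pos ha k))
      _ = D k := rfl
  -- base summable bound
  have hsum0 : Summable (fun k : ℕ => R ^ k / D k) := by
    refine Summable.of_nonneg_of_le (fun k => div_nonneg (by positivity) (hD k).le)
      (fun k => ?_) ((Real.summable_pow_div_factorial R).mul_left (1 / m))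
    have hf : (0:ℝ) < (k.factorial : ℝ) := by positivity
    have h1 : R ^ k / D k ≤ R ^ k / (m * k.factorial) :=
      div_le_div_of_nonneg_left (by positivity) (by positivity) (hDge k)
    calc R ^ k / D k ≤ R ^ k / (m * k.factorial) := h1
      _ = (1 / m) * (R ^ k / k.factorial) := by field_simp
  -- the uniform error bound
  set B : ℕ → ℝ := fun n => ∑' k : ℕ, |cc n k - (-1) ^ k| * R ^ k / D k with hBdef
  have hBsummand_le : ∀ n, 1 ≤ n → ∀ k, |cc n k - (-1) ^ k| * R ^ k / D k ≤ 2 * (R ^ k / D k) := by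
    intro n hn k
    have h1 : |cc n k - (-1) ^ k| ≤ 2 := by
      have h2 := cc_abs_le n k hn
      have h3 : |(-1 : ℝ) ^ k| = 1 := by
        rw [abs_pow, abs_neg, abs_one, one_pow]
      calc |cc n k - (-1) ^ k| ≤ |cc n k| + |(-1:ℝ) ^ k| := abs_sub _ _
        _ ≤ 1 + 1 := by rw [h3]; linarith
        _ = 2 := by norm_num
    rw [show (2:ℝ) * (R ^ k / D k) = 2 * R ^ k / D k from by ring]
    have hDk := hD k
    gcongr
  have hBsum : ∀ n, 1 ≤ n → Summable (fun k => |cc n k - (-1) ^ k| * R ^ k / D k) := by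
    intro n hn
    exact Summable.of_nonneg_of_le
      (fun k => div_nonneg (mul_nonneg (abs_nonneg _) (by positivity)) (hD k).le)
      (hBsummand_le n hn) (hsum0.mul_left 2)
  have hB0 : Tendsto B atTop (𝓝 0) := by
    have h0 : (0:ℝ) = ∑' _k : ℕ, (0:ℝ) := by simp
    rw [hBdef, h0]
    apply tendsto_tsum_of_dominated_convergence (hsum0.mul_left 2)
    · intro k
      have hc := cc_tendsto k
      have : Tendsto (fun n : ℕ => |cc n k - (-1) ^ k| * R ^ k / D k) atTop
          (𝓝 (|(-1:ℝ)^k - (-1)^k| * R ^ k / D k)) := by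
        apply Tendsto.div_const
        apply Tendsto.mul_const
        exact (hc.sub_const _).abs
      simpa using this
    · filter_upwards [eventually_ge_atTop 1] with n hn k
      have hpos : (0:ℝ) ≤ |cc n k - (-1) ^ k| * R ^ k / D k :=
        div_nonneg (mul_nonneg (abs_nonneg _) (by positivity)) (hD k).le
      rw [Real.norm_eq_abs, abs_of_nonneg hpos]
      exact hBsummand_le n hn k
  -- master pointwise bound
  rw [Metric.tendstoUniformlyOn_iff]
  intro eps heps
  filter_upwards [hB0.eventually (gt_mem_nhds heps), eventually_ge_atTop 1]
    with n hBn hn z hz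
  have hn0 : ((n : ℂ)) ≠ 0 := by
    exact_mod_cast Nat.cast_ne_zero.2 (by omega)
  -- rewrite the finite sum as a tsum
  set T : ℕ → ℂ := fun k => (poch (-(n : ℝ)) k : ℂ) * (z / (n : ℂ)) ^ k /
      ((poch a k : ℂ) * (poch b k : ℂ) * (k.factorial : ℂ)) with hTdef
  set G : ℕ → ℂ := fun k => (-z) ^ k /
      ((poch a k : ℂ) * (poch b k : ℂ) * (k.factorial : ℂ)) with hGdef
  have hvanish : ∀ k ∉ Finset.range (n + 1), T k = 0 := by
    intro k hk
    rw [Finset.mem_range, not_lt] at hk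
    have : poch (-(n : ℝ)) k = 0 := poch_neg_vanish n k (by omega)
    simp [hTdef, this]
  have hsumfin : ∑ k ∈ Finset.range (n + 1), T k = ∑' k, T k :=
    (tsum_eq_sum hvanish).symm
  have hDcast : ∀ k : ℕ, ((poch a k : ℂ) * (poch b k : ℂ) * (k.factorial : ℂ)) = ((D k : ℝ) : ℂ) := by
    intro k; push_cast [hDdef]; ring
  have hTeq : ∀ k, T k = ((cc n k : ℝ) : ℂ) * z ^ k / ((D k : ℝ) : ℂ) := by
    intro k
    rw [hTdef]
    simp only [hDcast]
    congr 1
    have hp : ((poch (-(n : ℝ)) k : ℝ) : ℂ) = ((n:ℝ):ℂ) ^ k * ((cc n k : ℝ):ℂ) := by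
      exact_mod_cast congrArg (fun x : ℝ => (x : ℂ)) (poch_neg_eq n k hn)
    rw [hp, div_pow]
    have hnk : ((n : ℂ)) ^ k ≠ 0 := pow_ne_zero _ hn0
    have : ((n:ℝ):ℂ) = (n : ℂ) := by push_cast; ring
    rw [this]
    field_simp
  have hGeq : ∀ k, G k = ((-1 : ℂ)) ^ k * z ^ k / ((D k : ℝ) : ℂ) := by
    intro k
    rw [hGdef]
    simp only [hDcast]
    rw [neg_pow]
  have hzR : ‖z‖ ≤ R := hR z hz
  have hdiffbound : ∀ k, ‖G k - T k‖ ≤ |cc n k - (-1) ^ k| * R ^ k / D k := by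
    intro k
    rw [hTeq, hGeq]
    have : (-1 : ℂ) ^ k * z ^ k / ((D k : ℝ) : ℂ) - ((cc n k : ℝ):ℂ) * z ^ k / ((D k : ℝ):ℂ)
        = (((-1:ℝ)^k - cc n k : ℝ) : ℂ) * z ^ k / ((D k : ℝ):ℂ) := by
      push_cast
      ring
    rw [this, norm_div, norm_mul, Complex.norm_real, Complex.norm_real, norm_pow]
    rw [Real.norm_eq_abs, Real.norm_eq_abs, abs_of_pos (hD k)]
    rw [abs_sub_comm]
    have hDk := hD k
    gcongr
  have hGsummable : Summable G := by
    apply Summable.of_norm_bounded hsum0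
    intro k
    rw [hGeq, norm_div, norm_mul, norm_pow, norm_neg, norm_one, one_pow, one_mul,
      norm_pow, Complex.norm_real, Real.norm_eq_abs, abs_of_pos (hD k)]
    have hDk := hD k
    gcongr
  have hTsummable : Summable T := summable_of_ne_finset_zero hvanish
  have key : dist (∑' k, G k) (∑ k ∈ Finset.range (n + 1), T k) ≤ B n := by
    rw [hsumfin, dist_eq_norm, ← Summable.tsum_sub hGsummable hTsummable]
    exact tsum_of_norm_bounded ((hBsum n hn).hasSum) hdiffbound
  calc dist (∑' k, G k) (∑ k ∈ Finset.range (n + 1), T k) ≤ B n := key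
    _ < eps := hBn
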